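/- Let k ≥ 3 and let A_k be the k×k complex matrix with ones strictly above the diagonal and zeros elsewhere. Then the vertical segment { −1/2 + i·y : y ∈ ℝ, |y| ≤ (1/2)·cot(π/k) } is contained in the numerical range W(A_k); that is, for every such y there exists x ∈ ℂ^k with ‖x‖₂ = 1 and x* A_k x = −1/2 + i·y. -/

import Mathlib

open scoped BigOperators
open Finset Complex
private lemma geom_zero {k : ℕ} {u : ℂ} (hu : u ^ k = 1) (h1 : u ≠ 1) :
    ∑ j ∈ Finset.range k, u ^ j = 0 := by
  rw [geom_sum_eq h1, hu, sub_self, zero_div]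

private lemma exp_ne_one' {r : ℝ} (h0 : r ≠ 0) (h1 : |r| < 1) :
    Complex.exp ((2 * Real.pi * r : ℝ) * Complex.I) ≠ 1 := by
  intro h
  rw [Complex.exp_eq_one_iff] at h
  obtain ⟨n, hn⟩ := h
  have him : 2 * Real.pi * r = n * (2 * Real.pi) := by
    have := congrArg Complex.im hn
    simpa using this
  have hrn : r = n := by
    have h2 : (2 * Real.pi) * r = (2 * Real.pi) * n := by linarith
    exact mul_left_cancel₀ (by positivity) h2
  rcases eq_or_ne n 0 with h | h
  · exact h0 (by rw [hrn, h]; norm_num)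
  · have : (1:ℝ) ≤ |(n:ℝ)| := by exact_mod_cast Int.one_le_abs h
    rw [hrn] at h1; linarith

private lemma double_sum_eq (k : ℕ) (F G : ℕ → ℂ) :
    ∑ i ∈ range k, ∑ j ∈ range k, (if i < j then F i * G j else 0)
      = ∑ j ∈ range k, (∑ i ∈ range j, F i) * G j := by
  rw [Finset.sum_comm]
  refine Finset.sum_congr rfl fun j hj => ?_
  have hjk := Finset.mem_range.mp hj
  have hf : (range k).filter (fun i => i < j) = range j := by
    ext i; simp only [Finset.mem_filter, Finset.mem_range]; omega
  rw [Finset.sum_ite, Finset.sum_const_zero, add_zero, hf, ← Finset.sum_mul]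

private lemma fin_double (k : ℕ) (F : ℕ → ℕ → ℂ) :
    ∑ i : Fin k, ∑ j : Fin k, F i j = ∑ i ∈ range k, ∑ j ∈ range k, F i j := by
  rw [Fin.sum_univ_eq_sum_range (fun i => ∑ j : Fin k, F i j) k]
  exact Finset.sum_congr rfl fun i _ => Fin.sum_univ_eq_sum_range (fun j => F i j) k

private lemma key_inv (s co : ℝ) (hs : (s:ℂ) ≠ 0) (h : (s:ℂ)^2 + (co:ℂ)^2 = 1) :
    (((2*co^2 - 1 : ℝ) : ℂ) + ((2*s*co : ℝ) : ℂ) * Complex.I - 1) * (-(1/2) - ((1/2*(co/s) : ℝ) : ℂ) * Complex.I) = 1 := by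
  push_cast
  field_simp
  linear_combination (-2*(co:ℂ)*Complex.I)*h + (-2*(co:ℂ)^2*(s:ℂ))*Complex.I_sq

/-- For k ≥ 3 and A_k the k×k strictly-upper-triangular all-ones matrix, the
vertical segment {−1/2 + iy : |y| ≤ (1/2)cot(π/k)} is contained in the numerical
range W(A_k). -/
theorem flat_segment_in_range (k : ℕ) (hk : 3 ≤ k) (y : ℝ)
    (hy : |y| ≤ (1 / 2) * Real.cot (Real.pi / k)) :
    let A : Matrix (Fin k) (Fin k) ℂ := fun i j => if (i : ℕ) < (j : ℕ) then 1 else 0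
    ∃ x : Fin k → ℂ, ∑ i, ‖x i‖ ^ 2 = 1 ∧
      (∑ i, ∑ j, (starRingEnd ℂ) (x i) * A i j * x j) = -(1 / 2) + (y : ℂ) * Complex.I := by
  intro A
  have hkR : (0:ℝ) < k := by exact_mod_cast (by omega : 0 < k)
  have hk0 : (k:ℂ) ≠ 0 := Nat.cast_ne_zero.mpr (by omega)
  have hk3 : (3:ℝ) ≤ (k:ℝ) := by exact_mod_cast hk
  set θ : ℝ := Real.pi / k with hθ
  have hθpos : 0 < θ := div_pos Real.pi_pos hkR
  have hθlt : θ < Real.pi / 2 := by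
    rw [hθ, div_lt_div_iff₀ hkR two_pos]
    have hk3 : (3:ℝ) ≤ k := by exact_mod_cast hk
    nlinarith [Real.pi_pos]
  have hsin : 0 < Real.sin θ := Real.sin_pos_of_pos_of_lt_pi hθpos (by linarith [Real.pi_pos])
  have hcos : 0 < Real.cos θ := Real.cos_pos_of_mem_Ioo ⟨by linarith, hθlt⟩
  set c : ℝ := 1 / 2 * Real.cot θ with hcdef
  have hcot : Real.cot θ = Real.cos θ / Real.sin θ := Real.cot_eq_cos_div_sin θ
  have hc : 0 < c := by rw [hcdef, hcot]; positivity
  have hyc := abs_le.mp hy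
  have hd1 : -1 ≤ y / c := by
    have := (div_le_div_iff_of_pos_right hc).mpr hyc.1
    rwa [neg_div, div_self hc.ne'] at this
  have hd2 : y / c ≤ 1 := by
    have := (div_le_div_iff_of_pos_right hc).mpr hyc.2
    rwa [div_self hc.ne'] at this
  set a : ℝ := Real.sqrt ((1 + y / c) / 2) with hadef
  set b : ℝ := Real.sqrt ((1 - y / c) / 2) with hbdef
  have ha2 : a ^ 2 = (1 + y / c) / 2 := Real.sq_sqrt (by linarith)
  have hb2 : b ^ 2 = (1 - y / c) / 2 := Real.sq_sqrt (by linarith)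
  have hab1 : a ^ 2 + b ^ 2 = 1 := by rw [ha2, hb2]; ring
  have hab2 : (a ^ 2 - b ^ 2) * c = y := by
    rw [ha2, hb2]
    field_simp
    ring
  set ω : ℂ := Complex.exp ((2 * Real.pi / k : ℝ) * Complex.I) with hωdef
  have hωk : ω ^ k = 1 := by
    rw [hωdef, ← Complex.exp_nat_mul]
    rw [show ((k:ℂ) * (((2 * Real.pi / k : ℝ) : ℂ) * Complex.I)) = 2 * (Real.pi:ℂ) * Complex.I by
      push_cast; field_simp]
    exact Complex.exp_two_pi_mul_I
  have hω1 : ω ≠ 1 := by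
    rw [hωdef, show (2 * Real.pi / k : ℝ) = 2 * Real.pi * (1 / k) by ring]
    refine exp_ne_one' (by positivity) ?_
    rw [abs_of_pos (by positivity)]
    rw [div_lt_one hkR]
    linarith
  have hω2 : ω ^ 2 ≠ 1 := by
    rw [hωdef, ← Complex.exp_nat_mul]
    rw [show ((2:ℕ):ℂ) * (((2 * Real.pi / k : ℝ) : ℂ) * Complex.I)
        = ((2 * Real.pi * (2 / k) : ℝ) : ℂ) * Complex.I by push_cast; ring]
    refine exp_ne_one' (by positivity) ?_
    rw [abs_of_pos (by positivity), div_lt_one hkR]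
    linarith
  set w : ℂ := (starRingEnd ℂ) ω with hwdef
  have habs : ‖ω‖ = 1 := by rw [hωdef]; exact Complex.norm_exp_ofReal_mul_I _
  have hww : w * ω = 1 := by
    rw [hwdef, mul_comm, Complex.mul_conj, Complex.normSq_eq_norm_sq, habs]
    norm_num
  have hwk : w ^ k = 1 := by rw [hwdef, ← map_pow, hωk, map_one]
  have hw1 : w ≠ 1 := by
    intro h
    apply hω1
    have := congrArg (starRingEnd ℂ) h
    rwa [hwdef, Complex.conj_conj, map_one] at this
  have hw2 : w ^ 2 ≠ 1 := by
    intro h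
    apply hω2
    have := congrArg (starRingEnd ℂ) h
    rwa [hwdef, ← map_pow, Complex.conj_conj, map_one] at this
  have hGω : ∑ j ∈ range k, ω ^ j = 0 := geom_zero hωk hω1
  have hGw : ∑ j ∈ range k, w ^ j = 0 := geom_zero hwk hw1
  have hGω2 : ∑ j ∈ range k, (ω ^ 2) ^ j = 0 :=
    geom_zero (by rw [← pow_mul, mul_comm, pow_mul, hωk, one_pow]) hω2
  have hGw2 : ∑ j ∈ range k, (w ^ 2) ^ j = 0 :=
    geom_zero (by rw [← pow_mul, mul_comm, pow_mul, hwk, one_pow]) hw2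
  have hωcs : ω = ↑(Real.cos (2*θ)) + ↑(Real.sin (2*θ)) * Complex.I := by
    rw [hωdef, show (2 * Real.pi / k : ℝ) = 2*θ by rw [hθ]; ring, Complex.exp_mul_I,
      ← Complex.ofReal_cos, ← Complex.ofReal_sin]
  have hs0 : (Real.sin θ : ℂ) ≠ 0 := Complex.ofReal_ne_zero.mpr hsin.ne'
  have hpy : (Real.sin θ : ℂ)^2 + (Real.cos θ : ℂ)^2 = 1 := by
    exact_mod_cast Real.sin_sq_add_cos_sq θ
  have hv : (ω - 1) * (-(1/2) - (c:ℝ) * Complex.I) = 1 := by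
    rw [hωcs, Real.cos_two_mul, Real.sin_two_mul, hcdef, hcot]
    exact key_inv _ _ hs0 hpy
  have hu : (w - 1) * (-(1/2) + (c:ℝ) * Complex.I) = 1 := by
    have h1 : w - 1 = (starRingEnd ℂ) (ω - 1) := by rw [hwdef, map_sub, map_one]
    have h2 : (-(1/2) + (c:ℝ) * Complex.I : ℂ)
        = (starRingEnd ℂ) (-(1/2) - (c:ℝ) * Complex.I) := by
      simp [map_sub, map_ofNat, Complex.conj_ofReal, Complex.conj_I]
    rw [h1, h2, ← map_mul, hv, map_one]
  have hv' : (ω - 1)⁻¹ = -(1/2) - (c:ℝ) * Complex.I := inv_eq_of_mul_eq_one_right hv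
  have hu' : (w - 1)⁻¹ = -(1/2) + (c:ℝ) * Complex.I := inv_eq_of_mul_eq_one_right hu
  set s : ℂ := ((Real.sqrt k : ℝ) : ℂ) with hsdef
  have hs2 : s ^ 2 = (k:ℂ) := by
    rw [hsdef, ← Complex.ofReal_pow, Real.sq_sqrt hkR.le]
    norm_cast
  have hsne : s ≠ 0 := by
    rw [hsdef]
    exact Complex.ofReal_ne_zero.mpr (Real.sqrt_pos.mpr hkR).ne'
  have hconjf : ∀ n : ℕ, (starRingEnd ℂ) (((a:ℂ) * ω ^ n + (b:ℂ) * w ^ n) / s)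
      = ((a:ℂ) * w ^ n + (b:ℂ) * ω ^ n) / s := by
    intro n
    have e2 : (starRingEnd ℂ) w = ω := by rw [hwdef, Complex.conj_conj]
    rw [map_div₀, map_add, map_mul, map_mul, map_pow, map_pow, Complex.conj_ofReal,
      Complex.conj_ofReal, ← hwdef, e2, hsdef, Complex.conj_ofReal]
  have hab1c : (a:ℂ)^2 + (b:ℂ)^2 = 1 := by exact_mod_cast hab1
  have hab2c : ((a:ℂ)^2 - (b:ℂ)^2) * (c:ℂ) = (y:ℂ) := by exact_mod_cast hab2
  refine ⟨fun i => ((a:ℂ) * ω ^ (i:ℕ) + (b:ℂ) * w ^ (i:ℕ)) / s, ?_, ?_⟩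
  · -- norm
    have habs2 : ∀ z : ℂ, ((‖z‖:ℂ))^2 = (starRingEnd ℂ) z * z := by
      intro z
      rw [mul_comm, Complex.mul_conj, ← Complex.ofReal_pow]
      norm_cast
      rw [Complex.sq_norm]
    have hterm : ∀ n : ℕ, ((a:ℂ)*w^n + (b:ℂ)*ω^n) * ((a:ℂ)*ω^n + (b:ℂ)*w^n)
        = ((a:ℂ)^2 + (b:ℂ)^2) + ((a:ℂ)*(b:ℂ)*(w^2)^n + (a:ℂ)*(b:ℂ)*(ω^2)^n) := by
      intro n
      have h1 : w ^ n * ω ^ n = 1 := by rw [← mul_pow, hww, one_pow]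
      have e1 : (ω^2)^n = (ω^n)^2 := by rw [← pow_mul, ← pow_mul, mul_comm]
      have e2 : (w^2)^n = (w^n)^2 := by rw [← pow_mul, ← pow_mul, mul_comm]
      rw [e1, e2]
      linear_combination ((a:ℂ)^2 + (b:ℂ)^2) * h1
    have hsum : (∑ n ∈ range k, ((‖((a:ℂ)*ω^n + (b:ℂ)*w^n)/s‖:ℂ))^2) = 1 := by
      have e : ∀ n ∈ range k, ((‖((a:ℂ)*ω^n + (b:ℂ)*w^n)/s‖:ℂ))^2
          = (((a:ℂ)*w^n + (b:ℂ)*ω^n) * ((a:ℂ)*ω^n + (b:ℂ)*w^n)) / (k:ℂ) := by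
        intro n _
        rw [habs2, hconjf n, div_mul_div_comm, ← pow_two, hs2]
      rw [Finset.sum_congr rfl e, ← Finset.sum_div,
        Finset.sum_congr rfl fun n _ => hterm n]
      simp only [Finset.sum_add_distrib, ← Finset.mul_sum, hGω2, hGw2, mul_zero,
        add_zero, Finset.sum_const, Finset.card_range, nsmul_eq_mul]
      field_simp
      linear_combination hab1c
    rw [Fin.sum_univ_eq_sum_range (fun n => ‖((a:ℂ)*ω^n + (b:ℂ)*w^n)/s‖^2) k]
    have := hsum
    push_cast at this
    exact_mod_cast this
  · -- the numerical range value
    simp only [A]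
    rw [fin_double k (fun m n => (starRingEnd ℂ) (((a:ℂ)*ω^m + (b:ℂ)*w^m)/s)
      * (if m < n then 1 else 0) * (((a:ℂ)*ω^n + (b:ℂ)*w^n)/s))]
    simp only [mul_ite, ite_mul, mul_one, mul_zero, zero_mul]
    rw [double_sum_eq k (fun m => (starRingEnd ℂ) (((a:ℂ)*ω^m + (b:ℂ)*w^m)/s))
      (fun n => ((a:ℂ)*ω^n + (b:ℂ)*w^n)/s)]
    have hinner : ∀ j : ℕ, (∑ i ∈ range j, (starRingEnd ℂ) (((a:ℂ)*ω^i + (b:ℂ)*w^i)/s))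
        = ((a:ℂ) * ((w^j - 1)/(w - 1)) + (b:ℂ) * ((ω^j - 1)/(ω - 1)))/s := by
      intro j
      rw [Finset.sum_congr rfl fun i _ => hconjf i, ← Finset.sum_div]
      congr 1
      rw [Finset.sum_add_distrib, ← Finset.mul_sum, ← Finset.mul_sum,
        geom_sum_eq hw1, geom_sum_eq hω1]
    have hterm2 : ∀ j : ℕ,
        (((a:ℂ) * ((w^j - 1)/(w - 1)) + (b:ℂ) * ((ω^j - 1)/(ω - 1)))/s)
          * (((a:ℂ)*ω^j + (b:ℂ)*w^j)/s)
        = ((a:ℂ)^2*(w-1)⁻¹*(1 - ω^j) + ((a:ℂ)*(b:ℂ)*(ω-1)⁻¹*((ω^2)^j - ω^j)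
          + ((a:ℂ)*(b:ℂ)*(w-1)⁻¹*((w^2)^j - w^j) + (b:ℂ)^2*(ω-1)⁻¹*(1 - w^j)))) / (k:ℂ) := by
      intro j
      have h1 : w ^ j * ω ^ j = 1 := by rw [← mul_pow, hww, one_pow]
      have e1 : (ω^2)^j = (ω^j)^2 := by rw [← pow_mul, ← pow_mul, mul_comm]
      have e2 : (w^2)^j = (w^j)^2 := by rw [← pow_mul, ← pow_mul, mul_comm]
      rw [e1, e2, ← hs2]
      linear_combination (((a:ℂ)^2*(w-1)⁻¹ + (b:ℂ)^2*(ω-1)⁻¹)/s^2) * h1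
    have hBIG : ∀ j ∈ range k,
        (∑ i ∈ range j, (starRingEnd ℂ) (((a:ℂ)*ω^i + (b:ℂ)*w^i)/s))
          * (((a:ℂ)*ω^j + (b:ℂ)*w^j)/s)
        = ((a:ℂ)^2*(w-1)⁻¹*(1 - ω^j) + ((a:ℂ)*(b:ℂ)*(ω-1)⁻¹*((ω^2)^j - ω^j)
          + ((a:ℂ)*(b:ℂ)*(w-1)⁻¹*((w^2)^j - w^j) + (b:ℂ)^2*(ω-1)⁻¹*(1 - w^j)))) / (k:ℂ) := by
      intro j _
      rw [hinner j]
      exact hterm2 j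
    rw [Finset.sum_congr rfl hBIG, ← Finset.sum_div]
    simp only [Finset.sum_add_distrib, Finset.sum_sub_distrib, ← Finset.mul_sum,
      hGω, hGw, hGω2, hGw2, Finset.sum_const, Finset.card_range, nsmul_eq_mul, mul_one,
      sub_zero, zero_sub, mul_zero, add_zero, mul_neg, neg_zero]
    rw [hu', hv']
    field_simp
    linear_combination (-(k:ℂ))*hab1c + (2*(k:ℂ)*Complex.I)*hab2c
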